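/- Let α ≥ 1 be real and let φ lie in the upper half-plane H. If z belongs to the closed disc D_φ (the closure of ℓ_φ(H)) and Im z ≤ 0, then z^{1/α} (principal branch) also has Im z^{1/α} ≤ 0 and belongs to the closed disc D_{φ^{1/α}} (the closure of ℓ_{φ^{1/α}}(H)). That is, the root map takes the lower part of the disc D_φ into the lower part of the disc D_{φ^{1/α}}. -/

import Mathlib

/- The upper half-plane H = {z : ℂ | Im z > 0}. -/
def UHP : Set ℂ := {z : ℂ | 0 < z.im}

/-- The Möbius transformation ℓ_φ(t) = tφ/(φ + t − 1), taking the upper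
half-plane onto the open disc bounded by the circle through 0, 1 and φ. -/
noncomputable def moeb (φ t : ℂ) : ℂ := t * φ / (φ + t - 1)

/-- The closed disc D_φ: the closure of ℓ_φ(H). -/
def discD (φ : ℂ) : Set ℂ := closure (moeb φ '' UHP)

open Real


lemma Jmono : MonotoneOn (fun u : ℝ => u⁻¹ - Real.cos u / Real.sin u) (Set.Ioo 0 π) := by
  have h : ∀ u ∈ Set.Ioo (0:ℝ) π, HasDerivAt (fun u : ℝ => u⁻¹ - Real.cos u / Real.sin u)
      (-(u^2)⁻¹ - ((-Real.sin u) * Real.sin u - Real.cos u * Real.cos u) / (Real.sin u)^2) u := by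
    intro u hu
    have hs : Real.sin u ≠ 0 := (Real.sin_pos_of_pos_of_lt_pi hu.1 hu.2).ne'
    exact (hasDerivAt_inv hu.1.ne').sub ((Real.hasDerivAt_cos u).div (Real.hasDerivAt_sin u) hs)
  apply monotoneOn_of_deriv_nonneg (convex_Ioo 0 π)
  · exact fun x hx => (h x hx).continuousAt.continuousWithinAt
  · intro x hx
    rw [interior_Ioo] at hx
    exact (h x hx).differentiableAt.differentiableWithinAt
  · intro x hx
    rw [interior_Ioo] at hx
    rw [(h x hx).deriv]
    have hs : 0 < Real.sin x := Real.sin_pos_of_pos_of_lt_pi hx.1 hx.2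
    have hid : (-Real.sin x) * Real.sin x - Real.cos x * Real.cos x = -1 := by
      nlinarith [Real.sin_sq_add_cos_sq x]
    rw [hid]
    have h1 : Real.sin x ^ 2 ≤ x^2 := by
      nlinarith [Real.sin_lt hx.1, hs]
    have h2 : (x^2)⁻¹ ≤ (Real.sin x ^ 2)⁻¹ := by
      apply inv_anti₀ (by positivity) h1
    have h3 : (-1 : ℝ) / Real.sin x ^2 = -((Real.sin x^2)⁻¹) := by ring
    rw [h3]
    linarith


lemma Qmono (β : ℝ) (hβ0 : 0 < β) (hβ1 : β < 1) :
    MonotoneOn (fun t : ℝ => (1/(1-β)) * Real.log (Real.sin (β*t))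
      + (1 - 1/(1-β)) * Real.log (Real.sin t) - Real.log t) (Set.Ioo 0 π) := by
  have h1β : (0:ℝ) < 1 - β := by linarith
  have h : ∀ t ∈ Set.Ioo (0:ℝ) π, HasDerivAt (fun t : ℝ => (1/(1-β)) * Real.log (Real.sin (β*t))
      + (1 - 1/(1-β)) * Real.log (Real.sin t) - Real.log t)
      ((1/(1-β)) * (Real.cos (β*t) * β / Real.sin (β*t))
        + (1 - 1/(1-β)) * (Real.cos t / Real.sin t) - t⁻¹) t := by
    intro t ht
    have hβt : β * t ∈ Set.Ioo (0:ℝ) π :=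
      ⟨mul_pos hβ0 ht.1, lt_of_le_of_lt (by nlinarith [ht.1.le, ht.2]) ht.2⟩
    have hs1 : Real.sin (β*t) ≠ 0 := (Real.sin_pos_of_pos_of_lt_pi hβt.1 hβt.2).ne'
    have hs2 : Real.sin t ≠ 0 := (Real.sin_pos_of_pos_of_lt_pi ht.1 ht.2).ne'
    have hbt : HasDerivAt (fun t : ℝ => Real.sin (β*t)) (Real.cos (β*t) * β) t := by
      have := (Real.hasDerivAt_sin (β*t)).comp t ((hasDerivAt_id t).const_mul β)
      simpa [Function.comp_def] using this
    exact (((hbt.log hs1).const_mul (1/(1-β))).add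
      (((Real.hasDerivAt_sin t).log hs2).const_mul (1 - 1/(1-β)))).sub (Real.hasDerivAt_log ht.1.ne')
  apply monotoneOn_of_deriv_nonneg (convex_Ioo 0 π)
  · exact fun x hx => (h x hx).continuousAt.continuousWithinAt
  · intro x hx; rw [interior_Ioo] at hx
    exact (h x hx).differentiableAt.differentiableWithinAt
  · intro t ht; rw [interior_Ioo] at ht
    rw [(h t ht).deriv]
    have hβt : β * t ∈ Set.Ioo (0:ℝ) π :=
      ⟨mul_pos hβ0 ht.1, lt_of_le_of_lt (by nlinarith [ht.1.le, ht.2]) ht.2⟩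
    have hle : β * t ≤ t := by nlinarith [ht.1.le]
    have hJ := Jmono hβt ht hle
    simp only at hJ
    have hAB : Real.cos t / Real.sin t + (β*t)⁻¹ - t⁻¹ ≤ Real.cos (β*t) / Real.sin (β*t) := by
      linarith
    have hv : β * (β*t)⁻¹ = t⁻¹ := by
      rw [mul_inv, ← mul_assoc, mul_inv_cancel₀ hβ0.ne', one_mul]
    have step : (1-β)*t⁻¹ ≤ β*(Real.cos (β*t) / Real.sin (β*t) - Real.cos t / Real.sin t) := by
      nlinarith [mul_le_mul_of_nonneg_left hAB hβ0.le]
    have hg : (1-β)*(1/(1-β)) = 1 := by field_simp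
    have e : (1-β) * ((1/(1-β)) * (Real.cos (β*t) * β / Real.sin (β*t))
        + (1 - 1/(1-β)) * (Real.cos t / Real.sin t) - t⁻¹)
        = β*(Real.cos (β*t) / Real.sin (β*t) - Real.cos t / Real.sin t) - (1-β)*t⁻¹ := by
      linear_combination (β * (Real.cos (β*t) / Real.sin (β*t)) - Real.cos t / Real.sin t) * hg
    have hfin : 0 ≤ (1-β) * ((1/(1-β)) * (Real.cos (β*t) * β / Real.sin (β*t))
        + (1 - 1/(1-β)) * (Real.cos t / Real.sin t) - t⁻¹) := by rw [e]; linarith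
    exact (mul_nonneg_iff_of_pos_left h1β).mp hfin


lemma key_trig (β σ Θ r R : ℝ) (hβ0 : 0 < β) (hβ1 : β ≤ 1) (hσ0 : 0 ≤ σ) (hΘ0 : 0 < Θ)
    (hsum : σ + Θ < π) (hr : 0 < r) (hR : 0 < R)
    (h : r * Real.sin Θ + R * Real.sin σ ≤ Real.sin (σ + Θ)) :
    r ^ β * Real.sin (β * Θ) + R ^ β * Real.sin (β * σ) ≤ Real.sin (β * (σ + Θ)) := by
  rcases eq_or_lt_of_le hβ1 with hβe | hβlt
  · subst hβe
    simpa using h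
  -- β < 1
  have h1β : (0:ℝ) < 1 - β := by linarith
  have hΘπ : Θ < π := by linarith
  have hsΘ : 0 < Real.sin Θ := Real.sin_pos_of_pos_of_lt_pi hΘ0 hΘπ
  have hβΘmem : β * Θ ∈ Set.Ioo (0:ℝ) π :=
    ⟨mul_pos hβ0 hΘ0, lt_of_le_of_lt (by nlinarith) hΘπ⟩
  have hsβΘ : 0 < Real.sin (β * Θ) := Real.sin_pos_of_pos_of_lt_pi hβΘmem.1 hβΘmem.2
  rcases eq_or_lt_of_le hσ0 with hσe | hσpos
  · -- σ = 0
    subst hσe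
    simp only [Real.sin_zero, mul_zero, Real.sin_zero] at h ⊢
    rw [zero_add] at h ⊢
    have hr1 : r ≤ 1 := by nlinarith
    have : r ^ β ≤ 1 := Real.rpow_le_one hr.le hr1 hβ0.le
    nlinarith
  -- σ > 0
  set s := σ + Θ with hs_def
  have hsmem : s ∈ Set.Ioo (0:ℝ) π := ⟨by linarith, hsum⟩
  have hσmem : σ ∈ Set.Ioo (0:ℝ) π := ⟨hσpos, by linarith⟩
  have hΘmem : Θ ∈ Set.Ioo (0:ℝ) π := ⟨hΘ0, hΘπ⟩
  have hβσmem : β * σ ∈ Set.Ioo (0:ℝ) π :=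
    ⟨mul_pos hβ0 hσpos, lt_of_le_of_lt (by nlinarith) hσmem.2⟩
  have hβsmem : β * s ∈ Set.Ioo (0:ℝ) π :=
    ⟨mul_pos hβ0 hsmem.1, lt_of_le_of_lt (by nlinarith [hsmem.1.le]) hsmem.2⟩
  have hsσ : 0 < Real.sin σ := Real.sin_pos_of_pos_of_lt_pi hσmem.1 hσmem.2
  have hss : 0 < Real.sin s := Real.sin_pos_of_pos_of_lt_pi hsmem.1 hsmem.2
  have hsβσ : 0 < Real.sin (β * σ) := Real.sin_pos_of_pos_of_lt_pi hβσmem.1 hβσmem.2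
  have hsβs : 0 < Real.sin (β * s) := Real.sin_pos_of_pos_of_lt_pi hβsmem.1 hβsmem.2
  set γ := 1/(1-β) with hγ_def
  have hγpos : 0 < γ := by positivity
  -- the function P
  set P : ℝ → ℝ := fun t => Real.sin (β*t) ^ γ * Real.sin t ^ (1-γ) with hP_def
  have hPval : ∀ t ∈ Set.Ioo (0:ℝ) π, P t = Real.exp ((1/(1-β)) * Real.log (Real.sin (β*t))
      + (1 - 1/(1-β)) * Real.log (Real.sin t) - Real.log t) * t := by
    intro t ht
    have h1 : 0 < Real.sin (β*t) := Real.sin_pos_of_pos_of_lt_pi (mul_pos hβ0 ht.1)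
      (lt_of_le_of_lt (by nlinarith [ht.1.le]) ht.2)
    have h2 : 0 < Real.sin t := Real.sin_pos_of_pos_of_lt_pi ht.1 ht.2
    rw [hP_def]
    simp only
    rw [Real.rpow_def_of_pos h1, Real.rpow_def_of_pos h2, Real.exp_sub, Real.exp_add,
      Real.exp_log ht.1]
    rw [hγ_def]
    field_simp [ht.1.ne']
  -- superadditivity of P
  have hQm := Qmono β hβ0 hβlt
  have hQσ : (fun t : ℝ => (1/(1-β)) * Real.log (Real.sin (β*t))
      + (1 - 1/(1-β)) * Real.log (Real.sin t) - Real.log t) σ ≤ (fun t : ℝ => (1/(1-β)) * Real.log (Real.sin (β*t))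
      + (1 - 1/(1-β)) * Real.log (Real.sin t) - Real.log t) s := hQm hσmem hsmem (by rw [hs_def]; linarith)
  have hQΘ : (fun t : ℝ => (1/(1-β)) * Real.log (Real.sin (β*t))
      + (1 - 1/(1-β)) * Real.log (Real.sin t) - Real.log t) Θ ≤ (fun t : ℝ => (1/(1-β)) * Real.log (Real.sin (β*t))
      + (1 - 1/(1-β)) * Real.log (Real.sin t) - Real.log t) s := hQm hΘmem hsmem (by rw [hs_def]; linarith)
  simp only at hQσ hQΘ
  have hsuper : P σ + P Θ ≤ P s := by
    rw [hPval σ hσmem, hPval Θ hΘmem, hPval s hsmem]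
    have e1 := mul_le_mul_of_nonneg_right (Real.exp_le_exp.mpr hQσ) hσpos.le
    have e2 := mul_le_mul_of_nonneg_right (Real.exp_le_exp.mpr hQΘ) hΘ0.le
    have e3 : Real.exp ((1/(1-β)) * Real.log (Real.sin (β*s))
        + (1 - 1/(1-β)) * Real.log (Real.sin s) - Real.log s) * s
        = Real.exp ((1/(1-β)) * Real.log (Real.sin (β*s))
        + (1 - 1/(1-β)) * Real.log (Real.sin s) - Real.log s) * σ
        + Real.exp ((1/(1-β)) * Real.log (Real.sin (β*s))
        + (1 - 1/(1-β)) * Real.log (Real.sin s) - Real.log s) * Θ := by rw [hs_def]; ring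
    linarith
  -- tangent line bound
  have tangent : ∀ x c : ℝ, 0 < x → 0 < c →
      x ^ β ≤ β * (c^(β-1) * x) + (1-β) * (c^(β-1) * c) := by
    intro x c hx hc
    have am := Real.geom_mean_le_arith_mean2_weighted (w₁ := β) (w₂ := 1-β) (p₁ := x) (p₂ := c)
      hβ0.le (by linarith) hx.le hc.le (by ring)
    have hpow : c^(1-β) * c^(β-1) = 1 := by
      rw [← Real.rpow_add hc]; norm_num
    calc x^β = x^β * (c^(1-β) * c^(β-1)) := by rw [hpow, mul_one]
    _ = (x^β * c^(1-β)) * c^(β-1) := by ring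
    _ ≤ (β*x + (1-β)*c) * c^(β-1) :=
        mul_le_mul_of_nonneg_right am (Real.rpow_nonneg hc.le _)
    _ = β * (c^(β-1)*x) + (1-β) * (c^(β-1)*c) := by ring
  -- the magic constants
  set c := (Real.sin (β*Θ) * Real.sin s / (Real.sin Θ * Real.sin (β*s))) ^ γ with hc_def
  set d := (Real.sin (β*σ) * Real.sin s / (Real.sin σ * Real.sin (β*s))) ^ γ with hd_def
  have hcpos : 0 < c := Real.rpow_pos_of_pos (div_pos (mul_pos hsβΘ hss) (mul_pos hsΘ hsβs)) _
  have hdpos : 0 < d := Real.rpow_pos_of_pos (div_pos (mul_pos hsβσ hss) (mul_pos hsσ hsβs)) _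
  have hγm : γ * (β - 1) = -1 := by rw [hγ_def]; field_simp; ring
  have hcb : c ^ (β-1) = Real.sin Θ * Real.sin (β*s) / (Real.sin (β*Θ) * Real.sin s) := by
    rw [hc_def, ← Real.rpow_mul (div_pos (mul_pos hsβΘ hss) (mul_pos hsΘ hsβs)).le, hγm,
      Real.rpow_neg_one, inv_div]
  have hdb : d ^ (β-1) = Real.sin σ * Real.sin (β*s) / (Real.sin (β*σ) * Real.sin s) := by
    rw [hd_def, ← Real.rpow_mul (div_pos (mul_pos hsβσ hss) (mul_pos hsσ hsβs)).le, hγm,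
      Real.rpow_neg_one, inv_div]
  set K := Real.sin (β*s) / Real.sin s with hK_def
  have hKpos : 0 < K := div_pos hsβs hss
  have hcb2 : c^(β-1) * Real.sin (β*Θ) = K * Real.sin Θ := by
    rw [hcb, hK_def]; field_simp
  have hdb2 : d^(β-1) * Real.sin (β*σ) = K * Real.sin σ := by
    rw [hdb, hK_def]; field_simp
  have main1 : r ^ β * Real.sin (β*Θ) ≤ β*K*(r*Real.sin Θ) + (1-β)*K*(c*Real.sin Θ) := by
    calc r^β * Real.sin (β*Θ) ≤ (β * (c^(β-1)*r) + (1-β) * (c^(β-1)*c)) * Real.sin (β*Θ) :=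
          mul_le_mul_of_nonneg_right (tangent r c hr hcpos) hsβΘ.le
    _ = β*(c^(β-1) * Real.sin (β*Θ))*r + (1-β)*(c^(β-1) * Real.sin (β*Θ))*c := by ring
    _ = β*K*(r*Real.sin Θ) + (1-β)*K*(c*Real.sin Θ) := by rw [hcb2]; ring
  have main2 : R ^ β * Real.sin (β*σ) ≤ β*K*(R*Real.sin σ) + (1-β)*K*(d*Real.sin σ) := by
    calc R^β * Real.sin (β*σ) ≤ (β * (d^(β-1)*R) + (1-β) * (d^(β-1)*d)) * Real.sin (β*σ) :=
          mul_le_mul_of_nonneg_right (tangent R d hR hdpos) hsβσ.le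
    _ = β*(d^(β-1) * Real.sin (β*σ))*R + (1-β)*(d^(β-1) * Real.sin (β*σ))*d := by ring
    _ = β*K*(R*Real.sin σ) + (1-β)*K*(d*Real.sin σ) := by rw [hdb2]; ring
  -- the diamond inequality
  have hcP : c * Real.sin Θ = P Θ * (Real.sin s / Real.sin (β*s)) ^ γ := by
    have e1 : Real.sin (β*Θ) * Real.sin s / (Real.sin Θ * Real.sin (β*s))
        = (Real.sin (β*Θ)/Real.sin Θ) * (Real.sin s/Real.sin (β*s)) := by ring
    rw [hc_def, e1, Real.mul_rpow (div_pos hsβΘ hsΘ).le (div_pos hss hsβs).le,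
      Real.div_rpow hsβΘ.le hsΘ.le]
    rw [hP_def]; simp only
    rw [Real.rpow_sub hsΘ, Real.rpow_one]
    ring
  have hdP : d * Real.sin σ = P σ * (Real.sin s / Real.sin (β*s)) ^ γ := by
    have e1 : Real.sin (β*σ) * Real.sin s / (Real.sin σ * Real.sin (β*s))
        = (Real.sin (β*σ)/Real.sin σ) * (Real.sin s/Real.sin (β*s)) := by ring
    rw [hd_def, e1, Real.mul_rpow (div_pos hsβσ hsσ).le (div_pos hss hsβs).le,
      Real.div_rpow hsβσ.le hsσ.le]
    rw [hP_def]; simp only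
    rw [Real.rpow_sub hsσ, Real.rpow_one]
    ring
  have hPs : P s * (Real.sin s / Real.sin (β*s)) ^ γ = Real.sin s := by
    rw [hP_def]; simp only
    rw [Real.div_rpow hss.le hsβs.le, Real.rpow_sub hss, Real.rpow_one]
    have h1 : Real.sin (β*s) ^ γ ≠ 0 := (Real.rpow_pos_of_pos hsβs _).ne'
    have h2 : Real.sin s ^ γ ≠ 0 := (Real.rpow_pos_of_pos hss _).ne'
    field_simp
  have diamond : c * Real.sin Θ + d * Real.sin σ ≤ Real.sin s := by
    calc c * Real.sin Θ + d * Real.sin σ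
        = (P σ + P Θ) * (Real.sin s / Real.sin (β*s)) ^ γ := by rw [hcP, hdP]; ring
    _ ≤ P s * (Real.sin s / Real.sin (β*s)) ^ γ :=
        mul_le_mul_of_nonneg_right hsuper (Real.rpow_nonneg (div_pos hss hsβs).le _)
    _ = Real.sin s := hPs
  -- put it together
  have step1 : r ^ β * Real.sin (β*Θ) + R ^ β * Real.sin (β*σ)
      ≤ β*K*(r*Real.sin Θ + R*Real.sin σ) + (1-β)*K*(c*Real.sin Θ + d*Real.sin σ) := by
    have e : β*K*(r*Real.sin Θ + R*Real.sin σ) + (1-β)*K*(c*Real.sin Θ + d*Real.sin σ)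
        = (β*K*(r*Real.sin Θ) + (1-β)*K*(c*Real.sin Θ))
          + (β*K*(R*Real.sin σ) + (1-β)*K*(d*Real.sin σ)) := by ring
    rw [e]; linarith
  have step2 : β*K*(r*Real.sin Θ + R*Real.sin σ) ≤ β*K*Real.sin s :=
    mul_le_mul_of_nonneg_left h (mul_nonneg hβ0.le hKpos.le)
  have step3 : (1-β)*K*(c*Real.sin Θ + d*Real.sin σ) ≤ (1-β)*K*Real.sin s :=
    mul_le_mul_of_nonneg_left diamond (mul_nonneg h1β.le hKpos.le)
  have step4 : β*K*Real.sin s + (1-β)*K*Real.sin s = Real.sin (β*s) := by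
    rw [hK_def]; field_simp; ring
  linarith

noncomputable def gfun (φ z : ℂ) : ℝ := (z * (1 - φ) * (starRingEnd ℂ) (z - φ)).im

lemma gfun_eq (φ z : ℂ) : gfun φ z
    = φ.im * (z.re - Complex.normSq z) + z.im * (Complex.normSq φ - φ.re) := by
  simp [gfun, Complex.mul_im, Complex.mul_re, Complex.normSq_apply]
  ring

lemma gfun_continuous (φ : ℂ) : Continuous (gfun φ) := by
  apply Complex.continuous_im.comp
  exact ((continuous_id.mul continuous_const).mul
    (Complex.continuous_conj.comp (continuous_id.sub continuous_const)))

lemma discD_subset (φ : ℂ) : discD φ ⊆ {z | 0 ≤ gfun φ z} := by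
  apply closure_minimal _ (isClosed_le continuous_const (gfun_continuous φ))
  rintro z ⟨t, ht, rfl⟩
  have ht' : 0 < t.im := ht
  rcases eq_or_ne (φ + t - 1) 0 with hd | hd
  · simp [moeb, hd, gfun]
  have hz : moeb φ t * (1 - φ) = t * (moeb φ t - φ) := by
    unfold moeb; field_simp; ring
  show 0 ≤ gfun φ (moeb φ t)
  unfold gfun
  rw [hz, mul_assoc, Complex.mul_conj]
  simp only [Complex.mul_im, Complex.ofReal_re, Complex.ofReal_im]
  have := Complex.normSq_nonneg (moeb φ t - φ)
  nlinarith

lemma subset_discD (χ : ℂ) (hχ : 0 < χ.im) {w : ℂ} (hw : 0 ≤ gfun χ w) : w ∈ discD χ := by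
  set a := χ.im with ha_def
  set c := (Complex.normSq χ - χ.re) / a with hc_def
  set p : ℂ := ⟨1/2, c/2⟩ with hp_def
  set r := Real.sqrt (1 + c^2) / 2 with hr_def
  have hrpos : 0 < r := by
    rw [hr_def]
    have : 0 < Real.sqrt (1 + c^2) := Real.sqrt_pos.mpr (by positivity)
    linarith
  have hac : a * c = Complex.normSq χ - χ.re := by
    rw [hc_def]; field_simp
  have hr2 : r^2 = (1 + c^2)/4 := by
    rw [hr_def, div_pow, Real.sq_sqrt (by positivity)]
    norm_num
  have key : ∀ v : ℂ, gfun χ v = a * (r^2 - Complex.normSq (v - p)) := by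
    intro v
    rw [gfun_eq, hr2]
    simp only [Complex.normSq_apply, Complex.sub_re, Complex.sub_im, hp_def]
    have hnsχ : Complex.normSq χ = χ.re^2 + χ.im^2 := by
      simp [Complex.normSq_apply]; ring
    linear_combination (-v.im) * hac + (-v.im) * hnsχ
  have hball : Metric.ball p r ⊆ moeb χ '' UHP := by
    intro v hv
    have hg : 0 < gfun χ v := by
      rw [key v]
      apply mul_pos hχ
      rw [sub_pos, ← Complex.sq_norm]
      have hd : ‖v - p‖ < r := by
        rw [← Complex.dist_eq]; exact hv
      exact pow_lt_pow_left₀ hd (norm_nonneg _) (by norm_num)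
    have hvχ : v ≠ χ := by
      intro h
      rw [h] at hg
      simp [gfun] at hg
    have hvχ' : v - χ ≠ 0 := sub_ne_zero.mpr hvχ
    set t := v * (1 - χ) / (v - χ) with ht_def
    have h5 : t * ((v - χ) * (starRingEnd ℂ) (v - χ)) = v * (1 - χ) * (starRingEnd ℂ) (v - χ) := by
      rw [← mul_assoc, ht_def, div_mul_cancel₀ _ hvχ']
    rw [Complex.mul_conj] at h5
    have h6 : t.im * Complex.normSq (v - χ) = gfun χ v := by
      have := congrArg Complex.im h5
      simpa [gfun, Complex.mul_im] using this
    have hn : 0 < Complex.normSq (v - χ) := Complex.normSq_pos.mpr hvχ'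
    have htim : 0 < t.im := by nlinarith
    have hχ0 : χ ≠ 0 := by
      intro h
      have h2 : χ.im = 0 := by rw [h]; rfl
      exact hχ.ne' (ha_def.trans h2)
    have hχ1 : (1:ℂ) - χ ≠ 0 := by
      intro h
      have := congrArg Complex.im h
      simp at this
      exact hχ.ne' (ha_def.trans this)
    have hden : χ + t - 1 = χ * (1 - χ) / (v - χ) := by
      rw [ht_def]; field_simp; ring
    have hden' : χ + t - 1 ≠ 0 := by
      rw [hden]
      exact div_ne_zero (mul_ne_zero hχ0 hχ1) hvχ'
    refine ⟨t, htim, ?_⟩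
    show moeb χ t = v
    rw [moeb, div_eq_iff hden', hden, ht_def]
    field_simp
  have hwball : w ∈ Metric.closedBall p r := by
    rw [Metric.mem_closedBall, Complex.dist_eq]
    have h1 : Complex.normSq (w - p) ≤ r^2 := by
      have := key w
      nlinarith [hw, hχ]
    calc ‖w - p‖ = Real.sqrt (Complex.normSq (w - p)) := Complex.norm_def _
    _ ≤ Real.sqrt (r^2) := Real.sqrt_le_sqrt h1
    _ = r := by rw [Real.sqrt_sq hrpos.le]
  rw [← closure_ball p hrpos.ne'] at hwball
  exact closure_mono hball hwball

lemma cpow_polar (z : ℂ) (hz : z ≠ 0) (b : ℝ) :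
    z ^ (b : ℂ) = ((‖z‖ ^ b : ℝ) : ℂ)
      * Complex.exp (((b * Complex.arg z : ℝ) : ℂ) * Complex.I) := by
  rw [Complex.cpow_def_of_ne_zero hz]
  rw [Complex.log]
  rw [show ((Real.log (‖z‖) : ℂ) + (Complex.arg z : ℂ) * Complex.I) * (b:ℂ)
      = ((b * Real.log (‖z‖) : ℝ) : ℂ) + ((b * Complex.arg z : ℝ) : ℂ) * Complex.I by
    push_cast; ring]
  rw [Complex.exp_add, ← Complex.ofReal_exp]
  rw [show Real.exp (b * Real.log (‖z‖)) = ‖z‖ ^ b by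
    rw [Real.rpow_def_of_pos (norm_pos_iff.mpr hz), mul_comm]]

lemma cpow_im (z : ℂ) (hz : z ≠ 0) (b : ℝ) :
    (z ^ (b : ℂ)).im = ‖z‖ ^ b * Real.sin (b * Complex.arg z) := by
  rw [cpow_polar z hz b]
  simp only [Complex.mul_im, Complex.ofReal_re, Complex.ofReal_im,
    Complex.exp_ofReal_mul_I_re, Complex.exp_ofReal_mul_I_im]
  ring

lemma cpow_re (z : ℂ) (hz : z ≠ 0) (b : ℝ) :
    (z ^ (b : ℂ)).re = ‖z‖ ^ b * Real.cos (b * Complex.arg z) := by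
  rw [cpow_polar z hz b]
  simp only [Complex.mul_re, Complex.ofReal_re, Complex.ofReal_im,
    Complex.exp_ofReal_mul_I_re, Complex.exp_ofReal_mul_I_im]
  ring

lemma cpow_abs (z : ℂ) (hz : z ≠ 0) (b : ℝ) :
    ‖z ^ (b : ℂ)‖ = ‖z‖ ^ b := by
  rw [cpow_polar z hz b, norm_mul, Complex.norm_exp_ofReal_mul_I, Complex.norm_real,
    Real.norm_of_nonneg (Real.rpow_nonneg (norm_nonneg z) b), mul_one]

/-- for α ≥ 1 and φ ∈ H, the principal root z ↦ z^{1/α} maps the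
lower part of the closed disc D_φ (points with Im z ≤ 0) into the lower part
of the closed disc D_{φ^{1/α}}. -/
theorem root_maps_lower_disc (α : ℝ) (hα : 1 ≤ α) (φ : ℂ) (hφ : φ ∈ UHP) :
    ∀ z ∈ discD φ, z.im ≤ 0 →
      (z ^ (((1 / α : ℝ)) : ℂ)).im ≤ 0 ∧
      z ^ (((1 / α : ℝ)) : ℂ) ∈ discD (φ ^ (((1 / α : ℝ)) : ℂ)) := by
  intro z hz hzim
  have hφim : 0 < φ.im := hφ
  have hα0 : (0:ℝ) < α := lt_of_lt_of_le one_pos hα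
  set b : ℝ := 1/α with hb_def
  have hb0 : 0 < b := by rw [hb_def]; positivity
  have hb1 : b ≤ 1 := by rw [hb_def, div_le_one hα0]; exact hα
  have hφ0 : φ ≠ 0 := by
    intro h; rw [h] at hφim; simp at hφim
  have hR : 0 < ‖φ‖ := norm_pos_iff.mpr hφ0
  have hΘ0 : 0 < Complex.arg φ := by
    rcases lt_or_eq_of_le (Complex.arg_nonneg_iff.mpr hφim.le) with h | h
    · exact h
    · exfalso
      have h2 := Complex.arg_eq_zero_iff.mp h.symm
      linarith [h2.2, hφim]
  have hΘπ : Complex.arg φ < π := by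
    rcases lt_or_eq_of_le (Complex.arg_le_pi φ) with h | h
    · exact h
    · exfalso
      have h2 := (Complex.arg_eq_pi_iff.mp h).2
      linarith
  have hχim : 0 < (φ ^ ((b:ℝ):ℂ)).im := by
    rw [cpow_im φ hφ0 b]
    apply mul_pos (Real.rpow_pos_of_pos hR b)
    apply Real.sin_pos_of_pos_of_lt_pi (mul_pos hb0 hΘ0)
    calc b * Complex.arg φ ≤ 1 * Complex.arg φ := mul_le_mul_of_nonneg_right hb1 hΘ0.le
    _ < π := by rwa [one_mul]
  have hgz : 0 ≤ gfun φ z := discD_subset φ hz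
  by_cases hz0 : z = 0
  · subst hz0
    rw [Complex.zero_cpow (Complex.ofReal_ne_zero.mpr hb0.ne')]
    refine ⟨by simp, ?_⟩
    apply subset_discD _ hχim
    simp [gfun]
  have hr : 0 < ‖z‖ := norm_pos_iff.mpr hz0
  have hψneg : Complex.arg z ≤ 0 := by
    rcases lt_or_eq_of_le hzim with h | h
    · exact (Complex.arg_neg_iff.mpr h).le
    · have h3 : z.im * (Complex.normSq φ - φ.re) = 0 := by rw [h]; ring
      have hre : 0 ≤ z.re := by
        rw [gfun_eq] at hgz
        nlinarith [Complex.normSq_nonneg z, hφim, hgz, h3]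
      rw [Complex.arg_eq_zero_iff.mpr ⟨hre, h⟩]
  have hψgt : -π < Complex.arg z := Complex.neg_pi_lt_arg z
  set σ : ℝ := -(Complex.arg z) with hσ_def
  have hσ0 : 0 ≤ σ := by rw [hσ_def]; linarith
  have hσπ : σ < π := by rw [hσ_def]; linarith
  have hhyp : ‖z‖ * Real.sin (Complex.arg φ) + ‖φ‖ * Real.sin σ
      ≤ Real.sin (σ + Complex.arg φ) := by
    have h0 := hgz
    rw [gfun_eq] at h0
    have hzre : z.re = ‖z‖ * Real.cos (Complex.arg z) := by
      rw [Complex.cos_arg hz0]; field_simp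
    have hzim2 : z.im = ‖z‖ * Real.sin (Complex.arg z) := by
      rw [Complex.sin_arg]; field_simp
    have hφre : φ.re = ‖φ‖ * Real.cos (Complex.arg φ) := by
      rw [Complex.cos_arg hφ0]; field_simp
    have hφim2 : φ.im = ‖φ‖ * Real.sin (Complex.arg φ) := by
      rw [Complex.sin_arg]; field_simp
    rw [hzre, hzim2, hφre, hφim2, Complex.normSq_eq_norm_sq, Complex.normSq_eq_norm_sq] at h0
    rw [hσ_def, Real.sin_add, Real.sin_neg, Real.cos_neg]
    nlinarith [h0, mul_pos hr hR]
  have hsinpos : 0 < Real.sin (σ + Complex.arg φ) := by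
    have h1 : 0 < ‖z‖ * Real.sin (Complex.arg φ) :=
      mul_pos hr (Real.sin_pos_of_pos_of_lt_pi hΘ0 hΘπ)
    have h2 : 0 ≤ ‖φ‖ * Real.sin σ :=
      mul_nonneg hR.le (Real.sin_nonneg_of_nonneg_of_le_pi hσ0 hσπ.le)
    linarith
  have hsum : σ + Complex.arg φ < π := by
    by_contra hcon
    push_neg at hcon
    have h1 : 0 ≤ Real.sin (σ + Complex.arg φ - π) :=
      Real.sin_nonneg_of_nonneg_of_le_pi (by linarith) (by linarith)
    have h2 : Real.sin (σ + Complex.arg φ) = -Real.sin (σ + Complex.arg φ - π) := by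
      rw [show σ + Complex.arg φ = (σ + Complex.arg φ - π) + π by ring, Real.sin_add]
      simp
    linarith
  have hkey := key_trig b σ (Complex.arg φ) (‖z‖) (‖φ‖)
    hb0 hb1 hσ0 hΘ0 hsum hr hR hhyp
  have hwim : (z ^ ((b:ℝ):ℂ)).im = -(‖z‖ ^ b * Real.sin (b * σ)) := by
    rw [cpow_im z hz0 b]
    have e : b * Complex.arg z = -(b*σ) := by rw [hσ_def]; ring
    rw [e, Real.sin_neg]
    ring
  have hbσπ : b * σ < π := by nlinarith
  have hsinbσ : 0 ≤ Real.sin (b*σ) :=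
    Real.sin_nonneg_of_nonneg_of_le_pi (by positivity) hbσπ.le
  have hwim_le : (z ^ ((b:ℝ):ℂ)).im ≤ 0 := by
    rw [hwim]
    have := mul_nonneg (Real.rpow_nonneg hr.le b) hsinbσ
    linarith
  refine ⟨hwim_le, ?_⟩
  apply subset_discD _ hχim
  rw [gfun_eq]
  have hwre : (z ^ ((b:ℝ):ℂ)).re = ‖z‖ ^ b * Real.cos (b*σ) := by
    rw [cpow_re z hz0 b]
    have e : b * Complex.arg z = -(b*σ) := by rw [hσ_def]; ring
    rw [e, Real.cos_neg]
  have hwns : Complex.normSq (z ^ ((b:ℝ):ℂ)) = (‖z‖ ^ b)^2 := by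
    rw [Complex.normSq_eq_norm_sq, cpow_abs z hz0 b]
  have hχre : (φ ^ ((b:ℝ):ℂ)).re = ‖φ‖ ^ b * Real.cos (b*Complex.arg φ) :=
    cpow_re φ hφ0 b
  have hχim2 : (φ ^ ((b:ℝ):ℂ)).im = ‖φ‖ ^ b * Real.sin (b*Complex.arg φ) :=
    cpow_im φ hφ0 b
  have hχns : Complex.normSq (φ ^ ((b:ℝ):ℂ)) = (‖φ‖ ^ b)^2 := by
    rw [Complex.normSq_eq_norm_sq, cpow_abs φ hφ0 b]
  rw [hwre, hwim, hwns, hχre, hχim2, hχns]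
  have e : Real.sin (b*(σ+Complex.arg φ)) = Real.sin (b*σ)*Real.cos (b*Complex.arg φ)
      + Real.cos (b*σ)*Real.sin (b*Complex.arg φ) := by
    rw [show b*(σ+Complex.arg φ) = b*σ + b*Complex.arg φ by ring, Real.sin_add]
  rw [e] at hkey
  have hρ0 : 0 ≤ ‖z‖ ^ b := Real.rpow_nonneg hr.le b
  have hP0 : 0 ≤ ‖φ‖ ^ b := Real.rpow_nonneg hR.le b
  have hfinal : 0 ≤ (‖z‖ ^ b * ‖φ‖ ^ b)
      * (Real.sin (b*σ)*Real.cos (b*Complex.arg φ) + Real.cos (b*σ)*Real.sin (b*Complex.arg φ)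
        - ‖z‖ ^ b * Real.sin (b*Complex.arg φ)
        - ‖φ‖ ^ b * Real.sin (b*σ)) :=
    mul_nonneg (mul_nonneg hρ0 hP0) (by linarith)
  nlinarith [hfinal]
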